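/- arXiv:2208.12887 — 2 statements merged into one kernel-verified Lean document; each statement's English description precedes it below -/
import Mathlib

section
/- Let p be a real number with 1 < p < 2 and let p′ = p/(p−1) be its Hölder conjugate. There exists a constant C > 0 (depending only on p) such that for every pair of compactly supported continuously differentiable functions T, S : ℝ² → ℝ and every measurable vector field u : ℝ² → ℝ² with finite L² norm (with respect to two-dimensional Lebesgue measure), the function x ↦ T(x)·(u(x) · ∇S(x)) is Lebesgue integrable on ℝ² and |∫_{ℝ²} T(x) (u(x) · ∇S(x)) dx| ≤ C · ‖u‖_{L²(ℝ²)} · ‖∇T‖_{L^p(ℝ²)} · ‖∇S‖_{L^{p′}(ℝ²)}. -/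
open MeasureTheory
open scoped ENNReal NNReal

/-- Bound (3.4) of the paper: the convective trilinear form
`(T, u, S) ↦ ∫ T (u · ∇S)` is well defined and bounded, with bound
`C ‖u‖_{L²} ‖∇T‖_{L^p} ‖∇S‖_{L^{p'}}` where `1 < p < 2` and `p' = p/(p-1)`. -/
theorem convective_term_bound (p : ℝ) (hp1 : 1 < p) (hp2 : p < 2) :
    ∃ C : ℝ, 0 < C ∧
      ∀ (T S : EuclideanSpace ℝ (Fin 2) → ℝ)
        (u : EuclideanSpace ℝ (Fin 2) → EuclideanSpace ℝ (Fin 2)),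
        ContDiff ℝ 1 T → HasCompactSupport T →
        ContDiff ℝ 1 S → HasCompactSupport S →
        Measurable u → eLpNorm u 2 volume < ⊤ →
        Integrable (fun x => T x * (inner ℝ (u x) (gradient S x) : ℝ)) volume ∧
          |∫ x, T x * (inner ℝ (u x) (gradient S x) : ℝ)| ≤
            C * (eLpNorm u 2 volume).toReal *
              (eLpNorm (gradient T) (ENNReal.ofReal p) volume).toReal *
              (eLpNorm (gradient S) (ENNReal.ofReal (p / (p - 1))) volume).toReal := by
  have hp0 : (0:ℝ) < p := by linarith
  have h2p : (0:ℝ) < 2 - p := by linarith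
  have hpm1 : (0:ℝ) < p - 1 := by linarith
  have h3p : (0:ℝ) < 3 * p - 2 := by linarith
  set E := EuclideanSpace ℝ (Fin 2)
  have hfr : Module.finrank ℝ E = 2 := finrank_euclideanSpace_fin
  -- exponents
  set qR : ℝ := 2 * p / (2 - p) with hqR_def
  set rR : ℝ := 2 * p / (3 * p - 2) with hrR_def
  set p'R : ℝ := p / (p - 1) with hp'R_def
  have hqR0 : 0 < qR := div_pos (by linarith) h2p
  have hrR0 : 0 < rR := div_pos (by linarith) h3p
  have hp'R0 : 0 < p'R := div_pos hp0 hpm1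
  set p₀ : NNReal := p.toNNReal with hp₀_def
  set q₀ : NNReal := qR.toNNReal with hq₀_def
  have hp₀coe : (p₀ : ℝ) = p := Real.coe_toNNReal _ hp0.le
  have hq₀coe : (q₀ : ℝ) = qR := Real.coe_toNNReal _ hqR0.le
  have hp₀1 : 1 ≤ p₀ := by
    rw [← NNReal.coe_le_coe, hp₀coe]; exact hp1.le
  -- the GNS constant
  set C₀ : NNReal := SNormLESNormFDerivOfEqConst ℝ (volume : Measure E) (p₀ : ℝ) with hC₀_def
  refine ⟨(C₀ : ℝ) + 1, by positivity, ?_⟩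
  intro T S u hT hTc hS hSc hu hu2
  -- coercions of exponents to ℝ≥0∞
  have hpE : (p₀ : ℝ≥0∞) = ENNReal.ofReal p := rfl
  have hqE : (q₀ : ℝ≥0∞) = ENNReal.ofReal qR := rfl
  -- gradient vs fderiv norms
  have hgrad_norm : ∀ (f : E → ℝ) (x : E), ‖gradient f x‖ = ‖fderiv ℝ f x‖ := by
    intro f x
    exact (InnerProductSpace.toDual ℝ E).symm.norm_map _
  have hgradT_eq : ∀ π : ℝ≥0∞, eLpNorm (gradient T) π volume = eLpNorm (fderiv ℝ T) π volume :=
    fun π => eLpNorm_congr_norm_ae (.of_forall fun x => hgrad_norm T x)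
  have hgradS_eq : ∀ π : ℝ≥0∞, eLpNorm (gradient S) π volume = eLpNorm (fderiv ℝ S) π volume :=
    fun π => eLpNorm_congr_norm_ae (.of_forall fun x => hgrad_norm S x)
  -- continuity and compact support of derivatives
  have hfdT_cont : Continuous (fderiv ℝ T) := hT.continuous_fderiv one_ne_zero
  have hfdS_cont : Continuous (fderiv ℝ S) := hS.continuous_fderiv one_ne_zero
  have hfdT_supp : HasCompactSupport (fderiv ℝ T) := hTc.fderiv ℝ
  have hfdS_supp : HasCompactSupport (fderiv ℝ S) := hSc.fderiv ℝ
  have hgradS_cont : Continuous (gradient S) :=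
    (InnerProductSpace.toDual ℝ E).symm.continuous.comp hfdS_cont
  -- Memℒp facts
  have hfdT_mem : MemLp (fderiv ℝ T) (ENNReal.ofReal p) volume :=
    hfdT_cont.memLp_of_hasCompactSupport hfdT_supp
  have hfdS_mem : MemLp (fderiv ℝ S) (ENNReal.ofReal p'R) volume :=
    hfdS_cont.memLp_of_hasCompactSupport hfdS_supp
  -- GNS inequality
  have hGNS : eLpNorm T (q₀ : ℝ≥0∞) volume ≤ C₀ * eLpNorm (fderiv ℝ T) (p₀ : ℝ≥0∞) volume := by
    refine eLpNorm_le_eLpNorm_fderiv_of_eq (volume : Measure E) hT hTc hp₀1 (by rw [hfr]; norm_num) ?_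
    rw [hfr, hq₀coe]
    push_cast [hp₀coe]
    rw [hqR_def]
    field_simp
  have hT_fin : eLpNorm T (q₀ : ℝ≥0∞) volume < ⊤ :=
    hGNS.trans_lt (ENNReal.mul_lt_top ENNReal.coe_lt_top (hpE ▸ hfdT_mem.2))
  -- the inner product function
  set f : E → ℝ := fun x => (inner ℝ (u x) (gradient S x) : ℝ) with hf_def
  have hu_meas : AEStronglyMeasurable u volume := hu.aestronglyMeasurable
  have hgradS_meas : AEStronglyMeasurable (gradient S) volume :=
    hgradS_cont.aestronglyMeasurable
  have hf_meas : AEStronglyMeasurable f volume := hu_meas.inner hgradS_meas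
  have hT_meas : AEStronglyMeasurable T volume := hT.continuous.aestronglyMeasurable
  -- exponent identities in ℝ≥0∞
  have h2E : (2 : ℝ≥0∞) = ENNReal.ofReal 2 := by norm_num
  have hrel₂ : 1 / ENNReal.ofReal rR = 1 / (2 : ℝ≥0∞) + 1 / ENNReal.ofReal p'R := by
    rw [h2E, one_div, one_div, one_div, ← ENNReal.ofReal_inv_of_pos hrR0,
      ← ENNReal.ofReal_inv_of_pos (by norm_num : (0:ℝ) < 2),
      ← ENNReal.ofReal_inv_of_pos hp'R0,
      ← ENNReal.ofReal_add (by positivity) (by positivity)]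
    congr 1
    rw [hrR_def, hp'R_def]
    field_simp
    ring
  have hrel₁ : 1 / (1 : ℝ≥0∞) = 1 / (q₀ : ℝ≥0∞) + 1 / ENNReal.ofReal rR := by
    rw [hqE, one_div_one, one_div, one_div, ← ENNReal.ofReal_inv_of_pos hqR0,
      ← ENNReal.ofReal_inv_of_pos hrR0,
      ← ENNReal.ofReal_add (by positivity) (by positivity), ← ENNReal.ofReal_one]
    congr 1
    rw [hqR_def, hrR_def]
    field_simp
    ring
  -- Hölder for the inner product
  have hf_le : eLpNorm f (ENNReal.ofReal rR) volume ≤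
      eLpNorm u 2 volume * eLpNorm (gradient S) (ENNReal.ofReal p'R) volume := by
    have := eLpNorm_le_eLpNorm_mul_eLpNorm_of_nnnorm (p := 2) (q := ENNReal.ofReal p'R)
      (r := ENNReal.ofReal rR) (hpqr := ⟨by simpa [one_div] using hrel₂.symm⟩)
      hu_meas hgradS_meas
      (fun a b => (inner ℝ a b : ℝ)) 1 (.of_forall fun x => by simpa using nnnorm_inner_le_nnnorm (𝕜 := ℝ) (u x) (gradient S x))
    rwa [ENNReal.coe_one, one_mul] at this
  have hgradS_fin : eLpNorm (gradient S) (ENNReal.ofReal p'R) volume < ⊤ := by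
    rw [hgradS_eq]; exact hfdS_mem.2
  have hf_fin : eLpNorm f (ENNReal.ofReal rR) volume < ⊤ :=
    hf_le.trans_lt (ENNReal.mul_lt_top hu2 hgradS_fin)
  -- Hölder for the product T * f
  have hTf_meas : AEStronglyMeasurable (fun x => T x * f x) volume := hT_meas.mul hf_meas
  have h1 : eLpNorm (fun x => T x * f x) 1 volume ≤
      eLpNorm T (q₀ : ℝ≥0∞) volume * eLpNorm f (ENNReal.ofReal rR) volume := by
    have := eLpNorm_le_eLpNorm_mul_eLpNorm_of_nnnorm (p := (q₀ : ℝ≥0∞)) (q := ENNReal.ofReal rR)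
      (r := 1) (hpqr := ⟨by simpa [one_div] using hrel₁.symm⟩)
      hT_meas hf_meas (· * ·) 1
      (.of_forall fun x => by simpa using (nnnorm_mul (T x) (f x)).le)
    rwa [ENNReal.coe_one, one_mul] at this
  have h1_fin : eLpNorm (fun x => T x * f x) 1 volume < ⊤ :=
    h1.trans_lt (ENNReal.mul_lt_top hT_fin hf_fin)
  have hInt : Integrable (fun x => T x * f x) volume :=
    memLp_one_iff_integrable.mp ⟨hTf_meas, h1_fin⟩
  refine ⟨hInt, ?_⟩
  -- full chain at ℝ≥0∞ level
  have hchain : eLpNorm (fun x => T x * f x) 1 volume ≤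
      (C₀ : ℝ≥0∞) * eLpNorm u 2 volume * eLpNorm (fderiv ℝ T) (ENNReal.ofReal p) volume *
        eLpNorm (gradient S) (ENNReal.ofReal p'R) volume := by
    calc eLpNorm (fun x => T x * f x) 1 volume
        ≤ eLpNorm T (q₀ : ℝ≥0∞) volume * eLpNorm f (ENNReal.ofReal rR) volume := h1
      _ ≤ (C₀ * eLpNorm (fderiv ℝ T) (p₀ : ℝ≥0∞) volume) *
            (eLpNorm u 2 volume * eLpNorm (gradient S) (ENNReal.ofReal p'R) volume) := by
          exact mul_le_mul' hGNS hf_le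
      _ = (C₀ : ℝ≥0∞) * eLpNorm u 2 volume * eLpNorm (fderiv ℝ T) (ENNReal.ofReal p) volume *
            eLpNorm (gradient S) (ENNReal.ofReal p'R) volume := by
          rw [hpE]; ring
  have hRHS_fin : (C₀ : ℝ≥0∞) * eLpNorm u 2 volume *
      eLpNorm (fderiv ℝ T) (ENNReal.ofReal p) volume *
      eLpNorm (gradient S) (ENNReal.ofReal p'R) volume < ⊤ :=
    ENNReal.mul_lt_top (ENNReal.mul_lt_top
      (ENNReal.mul_lt_top ENNReal.coe_lt_top hu2) hfdT_mem.2) hgradS_fin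
  have habs : |∫ x, T x * f x| ≤ (eLpNorm (fun x => T x * f x) 1 volume).toReal := by
    rw [eLpNorm_one_eq_lintegral_enorm, ← integral_norm_eq_lintegral_enorm hTf_meas]
    calc |∫ x, T x * f x| = ‖∫ x, T x * f x‖ := (Real.norm_eq_abs _).symm
      _ ≤ ∫ x, ‖T x * f x‖ := norm_integral_le_integral_norm _
  refine habs.trans ?_
  have := ENNReal.toReal_mono hRHS_fin.ne hchain
  refine this.trans ?_
  rw [ENNReal.toReal_mul, ENNReal.toReal_mul, ENNReal.toReal_mul, ENNReal.coe_toReal,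
    hgradT_eq (ENNReal.ofReal p)]
  gcongr
  · exact le_add_of_nonneg_right zero_le_one
end

section
/- Let K ⊂ ℝ² be a bounded convex measurable set with Lebesgue measure |K| satisfying 0 < |K| < ∞, let c ∈ K, let p ≥ 1, and let ν₊, ν₊′ > 0. Let ν : ℝ → ℝ be continuously differentiable with |ν(s)| ≤ ν₊ and |ν′(s)| ≤ ν₊′ for all s ∈ ℝ, and let S : ℝ² → ℝ be continuously differentiable. Define ν_h(S) : ℝ² → ℝ by ν_h(S)(x) = (1/|K|) ∫_K ν(S(y)) dy + [ (1/|K|) ∫_K ν′(S(y)) ∇S(y) dy ] · (x − c). Then for every x ∈ K, |ν_h(S)(x)| ≤ ν₊ + ν₊′ · diam(K) · |K|^{−1/p} · ‖∇S‖_{L^p(K)}. -/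
open MeasureTheory

/-- Estimate (5.9) of the paper for the elementwise linear approximation `ν_h(S)` of the
composed viscosity `ν(S)`: for every `x` in the (bounded, convex) element `K`,
`|ν_h(S)(x)| ≤ ν₊ + ν₊' · diam(K) · |K|^{-1/p} · ‖∇S‖_{L^p(K)}`. -/
theorem linear_viscosity_approx_bound (K : Set (EuclideanSpace ℝ (Fin 2)))
    (hKb : Bornology.IsBounded K) (hKc : Convex ℝ K) (hKm : MeasurableSet K)
    (hK0 : 0 < volume K) (hKfin : volume K < ⊤)
    (c : EuclideanSpace ℝ (Fin 2)) (hc : c ∈ K)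
    (p : ℝ) (hp : 1 ≤ p)
    (νplus νplus' : ℝ) (hνplus : 0 < νplus) (hνplus' : 0 < νplus')
    (ν : ℝ → ℝ) (hν : ContDiff ℝ 1 ν)
    (hνb : ∀ s : ℝ, |ν s| ≤ νplus) (hν'b : ∀ s : ℝ, |deriv ν s| ≤ νplus')
    (S : EuclideanSpace ℝ (Fin 2) → ℝ) (hS : ContDiff ℝ 1 S) :
    ∀ x ∈ K,
      |(volume K).toReal⁻¹ * (∫ y in K, ν (S y)) +
          (inner ℝ ((volume K).toReal⁻¹ • ∫ y in K, deriv ν (S y) • gradient S y)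
            (x - c) : ℝ)| ≤
        νplus + νplus' * Metric.diam K * (volume K).toReal ^ (-(1 / p)) *
          (∫ y in K, ‖gradient S y‖ ^ p) ^ (1 / p) := by
  intro x hx
  set V : ℝ := (volume K).toReal with hVdef
  have hV : 0 < V := ENNReal.toReal_pos hK0.ne' hKfin.ne
  have hclK : IsCompact (closure K) := hKb.isCompact_closure
  haveI : IsFiniteMeasure (volume.restrict K) :=
    ⟨by rwa [Measure.restrict_apply_univ]⟩
  -- continuity facts
  have hgradcont : Continuous (gradient S) := by
    have h1 : Continuous (fderiv ℝ S) := hS.continuous_fderiv one_ne_zero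
    have : Continuous fun y =>
        (InnerProductSpace.toDual ℝ (EuclideanSpace ℝ (Fin 2))).symm (fderiv ℝ S y) :=
      (InnerProductSpace.toDual ℝ (EuclideanSpace ℝ (Fin 2))).symm.continuous.comp h1
    exact this
  have hScont : Continuous S := hS.continuous
  have hν'cont : Continuous (deriv ν) := hν.continuous_deriv le_rfl
  -- integrability of continuous functions on K
  have key : ∀ {F : Type} [NormedAddCommGroup F] (f : EuclideanSpace ℝ (Fin 2) → F),
      Continuous f → IntegrableOn f K volume := by
    intro F _ f hf
    exact (hf.continuousOn.integrableOn_compact hclK).mono_set subset_closure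
  have hg_int : IntegrableOn (fun y => ‖gradient S y‖) K volume :=
    key _ hgradcont.norm
  have hgp_int : IntegrableOn (fun y => ‖gradient S y‖ ^ p) K volume := by
    refine key _ ?_
    exact hgradcont.norm.rpow_const (fun y => Or.inr (le_trans zero_le_one hp))
  have hvec_int : IntegrableOn (fun y => deriv ν (S y) • gradient S y) K volume :=
    key _ ((hν'cont.comp hScont).smul hgradcont)
  -- Part A
  have hA : |∫ y in K, ν (S y)| ≤ νplus * V := by
    have := norm_setIntegral_le_of_norm_le_const (μ := volume) (s := K)
      (f := fun y => ν (S y)) hKfin (fun y _ => by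
        simpa using hνb (S y))
    simpa [Real.norm_eq_abs, hVdef, Measure.real] using this
  -- Part B
  have hB : ‖∫ y in K, deriv ν (S y) • gradient S y‖ ≤
      νplus' * ∫ y in K, ‖gradient S y‖ := by
    calc ‖∫ y in K, deriv ν (S y) • gradient S y‖
        ≤ ∫ y in K, ‖deriv ν (S y) • gradient S y‖ :=
          norm_integral_le_integral_norm _
      _ ≤ ∫ y in K, νplus' * ‖gradient S y‖ := by
          refine setIntegral_mono_on hvec_int.norm (hg_int.const_mul _) hKm ?_
          intro y _
          rw [norm_smul]
          exact mul_le_mul_of_nonneg_right (by simpa using hν'b (S y)) (norm_nonneg _)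
      _ = νplus' * ∫ y in K, ‖gradient S y‖ := integral_const_mul _ _
  -- Part C : Hölder
  have hC : ∫ y in K, ‖gradient S y‖ ≤
      (∫ y in K, ‖gradient S y‖ ^ p) ^ (1 / p) * V ^ (1 - 1 / p) := by
    rcases eq_or_lt_of_le hp with hp1 | hp1
    · simp [← hp1, Real.rpow_one]
    · have hpq : p.HolderConjugate (Real.conjExponent p) := .conjExponent hp1
      obtain ⟨M, hM⟩ := hclK.exists_bound_of_continuousOn hgradcont.norm.continuousOn
      have hgmem : ∀ q : ENNReal, MemLp (fun y => ‖gradient S y‖) q (volume.restrict K) := by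
        intro q
        refine MemLp.mono_exponent (q := ⊤) ?_ le_top
        refine memLp_top_of_bound hgradcont.norm.aestronglyMeasurable.restrict M ?_
        filter_upwards [ae_restrict_mem hKm] with y hy
        simpa using hM y (subset_closure hy)
      have := integral_mul_le_Lp_mul_Lq_of_nonneg (μ := volume.restrict K) hpq
        (f := fun y => ‖gradient S y‖) (g := fun _ => (1 : ℝ))
        (Filter.Eventually.of_forall fun y => norm_nonneg _)
        (Filter.Eventually.of_forall fun y => zero_le_one)
        (hgmem _) (memLp_const 1)
      simp only [mul_one, one_pow] at this
      have h1q : ∫ (_ : EuclideanSpace ℝ (Fin 2)), (1:ℝ) ^ Real.conjExponent p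
          ∂(volume.restrict K) = V := by
        simp [hVdef, Measure.restrict_apply_univ, Measure.real]
      rw [h1q] at this
      calc ∫ y in K, ‖gradient S y‖
          ≤ (∫ y in K, ‖gradient S y‖ ^ p) ^ (1 / p) * V ^ (1 / Real.conjExponent p) :=
            this
        _ = (∫ y in K, ‖gradient S y‖ ^ p) ^ (1 / p) * V ^ (1 - 1 / p) := by
            congr 1
            rw [one_div, one_div, hpq.one_sub_inv]
  -- combine
  have hdiam : ‖x - c‖ ≤ Metric.diam K := by
    rw [← dist_eq_norm]
    exact Metric.dist_le_diam_of_mem hKb hx hc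
  set I : ℝ := (∫ y in K, ‖gradient S y‖ ^ p) ^ (1 / p) with hIdef
  have hI0 : 0 ≤ I := Real.rpow_nonneg
    (integral_nonneg fun y => Real.rpow_nonneg (norm_nonneg _) p) _
  have hg0 : 0 ≤ ∫ y in K, ‖gradient S y‖ := integral_nonneg fun y => norm_nonneg _
  have hstep1 : |V⁻¹ * ∫ y in K, ν (S y)| ≤ νplus := by
    rw [abs_mul, abs_of_nonneg (inv_nonneg.2 hV.le)]
    calc V⁻¹ * |∫ y in K, ν (S y)| ≤ V⁻¹ * (νplus * V) :=
          mul_le_mul_of_nonneg_left hA (inv_nonneg.2 hV.le)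
      _ = νplus := by field_simp
  have hstep2 : |(inner ℝ ((volume K).toReal⁻¹ • ∫ y in K, deriv ν (S y) • gradient S y)
      (x - c) : ℝ)| ≤ νplus' * Metric.diam K * V ^ (-(1 / p)) * I := by
    have h1 : |(inner ℝ ((volume K).toReal⁻¹ • ∫ y in K, deriv ν (S y) • gradient S y)
        (x - c) : ℝ)| ≤
        ‖(volume K).toReal⁻¹ • ∫ y in K, deriv ν (S y) • gradient S y‖ * ‖x - c‖ :=
      abs_real_inner_le_norm _ _
    have h2 : ‖(volume K).toReal⁻¹ • ∫ y in K, deriv ν (S y) • gradient S y‖ ≤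
        V⁻¹ * (νplus' * (I * V ^ (1 - 1 / p))) := by
      rw [norm_smul, Real.norm_eq_abs, abs_of_nonneg (inv_nonneg.2 hV.le)]
      refine mul_le_mul_of_nonneg_left (hB.trans ?_) (inv_nonneg.2 hV.le)
      exact mul_le_mul_of_nonneg_left hC hνplus'.le
    have hVpow : V⁻¹ * V ^ (1 - 1 / p) = V ^ (-(1 / p)) := by
      rw [← Real.rpow_neg_one V, ← Real.rpow_add hV]
      congr 1; ring
    calc |(inner ℝ ((volume K).toReal⁻¹ • ∫ y in K, deriv ν (S y) • gradient S y)
          (x - c) : ℝ)|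
        ≤ (V⁻¹ * (νplus' * (I * V ^ (1 - 1 / p)))) * Metric.diam K := by
          refine h1.trans (mul_le_mul h2 hdiam (norm_nonneg _) ?_)
          positivity
      _ = νplus' * Metric.diam K * (V⁻¹ * V ^ (1 - 1 / p)) * I := by ring
      _ = νplus' * Metric.diam K * V ^ (-(1 / p)) * I := by rw [hVpow]
  calc |(volume K).toReal⁻¹ * (∫ y in K, ν (S y)) +
        (inner ℝ ((volume K).toReal⁻¹ • ∫ y in K, deriv ν (S y) • gradient S y)
          (x - c) : ℝ)|
      ≤ |(volume K).toReal⁻¹ * (∫ y in K, ν (S y))| +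
        |(inner ℝ ((volume K).toReal⁻¹ • ∫ y in K, deriv ν (S y) • gradient S y)
          (x - c) : ℝ)| := abs_add_le _ _
    _ ≤ νplus + νplus' * Metric.diam K * V ^ (-(1 / p)) * I :=
        add_le_add hstep1 hstep2
end
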